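/- For real p > 1 and real a > 0, b with |b| < a, the integral ∫₀^∞ (cosh(b x)/sinh(a x)) x^{p-1} dx equals (Γ(p)/(2a)^p) · (ζ(p, (a-b)/(2a)) + ζ(p, (a+b)/(2a))), where ζ(s,q) is the Hurwitz zeta function. -/

import Mathlib

open Real MeasureTheory

private lemma aux_sum (p q : ℝ) (hp : 1 < p) (hq0 : 0 < q) (hq1 : q ≤ 1) :
    Summable (fun n : ℕ => ((n : ℝ) + q) ^ (-p)) := by
  have h1 : Summable (fun n : ℕ => ((n : ℝ) + 1) ^ (-p)) := by
    have := (summable_nat_add_iff 1).mpr (Real.summable_nat_rpow.mpr (by linarith : -p < -1))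
    simpa using this
  refine Summable.of_nonneg_of_le (fun n => Real.rpow_nonneg (by positivity) _) (fun n => ?_)
    (h1.mul_left (q ^ (-p)))
  have key : q * ((n : ℝ) + 1) ≤ (n : ℝ) + q := by nlinarith [Nat.cast_nonneg (α := ℝ) n]
  calc ((n : ℝ) + q) ^ (-p) ≤ (q * ((n : ℝ) + 1)) ^ (-p) :=
        Real.rpow_le_rpow_of_nonpos (by positivity) key (by linarith)
    _ = q ^ (-p) * ((n : ℝ) + 1) ^ (-p) := Real.mul_rpow hq0.le (by positivity)

private lemma aux_int (p r : ℝ) (hp : 0 < p) (hr : 0 < r) :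
    IntegrableOn (fun x : ℝ => x ^ (p - 1) * Real.exp (-(r * x))) (Set.Ioi 0) := by
  have h := Real.GammaIntegral_convergent hp
  rw [← mul_zero r, ← integrableOn_Ioi_comp_mul_left_iff _ _ hr] at h
  have h' : IntegrableOn (fun x : ℝ => (r ^ (p - 1))⁻¹ * (Real.exp (-(r * x)) * (r * x) ^ (p - 1)))
      (Set.Ioi 0) := h.const_mul _
  refine h'.congr_fun (fun x hx => ?_) measurableSet_Ioi
  have hx : (0 : ℝ) < x := hx
  beta_reduce
  rw [Real.mul_rpow hr.le hx.le]
  field_simp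

private lemma aux_pt (p a b x : ℝ) (ha : 0 < a) (hx : 0 < x) :
    Real.cosh (b * x) / Real.sinh (a * x) * x ^ (p - 1)
      = ∑' n : ℕ, (x ^ (p - 1) * Real.exp (-((2 * a * n + (a - b)) * x))
          + x ^ (p - 1) * Real.exp (-((2 * a * n + (a + b)) * x))) := by
  have hterm : ∀ (c : ℝ) (n : ℕ), Real.exp (-((2 * a * n + c) * x))
      = Real.exp (-(2 * a * x)) ^ n * Real.exp (-(c * x)) := by
    intro c n
    rw [← Real.exp_nat_mul, ← Real.exp_add]
    ring_nf
  have hrw : ∀ n : ℕ, (x ^ (p - 1) * Real.exp (-((2 * a * n + (a - b)) * x))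
        + x ^ (p - 1) * Real.exp (-((2 * a * n + (a + b)) * x)))
      = Real.exp (-(2 * a * x)) ^ n
        * (x ^ (p - 1) * (Real.exp (-((a - b) * x)) + Real.exp (-((a + b) * x)))) := by
    intro n
    rw [hterm, hterm]
    ring
  rw [tsum_congr hrw, tsum_mul_right,
    tsum_geometric_of_lt_one (Real.exp_nonneg _) (Real.exp_lt_one_iff.mpr (by nlinarith))]
  have h2 : Real.exp (-(2 * a * x)) = (Real.exp (a * x))⁻¹ * (Real.exp (a * x))⁻¹ := by
    rw [← Real.exp_neg, ← Real.exp_add]; ring_nf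
  have h3 : Real.exp (-((a - b) * x)) = Real.exp (b * x) * (Real.exp (a * x))⁻¹ := by
    rw [← Real.exp_neg, ← Real.exp_add]; ring_nf
  have h4 : Real.exp (-((a + b) * x)) = (Real.exp (b * x))⁻¹ * (Real.exp (a * x))⁻¹ := by
    rw [← Real.exp_neg, ← Real.exp_neg, ← Real.exp_add]; ring_nf
  have hu1 : 1 < Real.exp (a * x) := by
    rw [← Real.exp_zero, Real.exp_lt_exp]; positivity
  have hv : 0 < Real.exp (b * x) := Real.exp_pos _
  set u := Real.exp (a * x) with hu
  set v := Real.exp (b * x) with hv'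
  have hu0 : 0 < u := lt_trans one_pos hu1
  rw [Real.cosh_eq, Real.sinh_eq, Real.exp_neg, Real.exp_neg, ← hu, ← hv', h2, h3, h4]
  have hne1 : u - u⁻¹ ≠ 0 := by
    have : u⁻¹ < 1 := inv_lt_one_of_one_lt₀ hu1
    intro h; nlinarith
  have hne2 : 1 - u⁻¹ * u⁻¹ ≠ 0 := by
    have h1 : u⁻¹ < 1 := inv_lt_one_of_one_lt₀ hu1
    have h0 : 0 < u⁻¹ := inv_pos.mpr hu0
    intro h; nlinarith
  have hD : u * u - 1 ≠ 0 := by nlinarith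
  have e1 : u - u⁻¹ = (u * u - 1) / u := by field_simp
  have e2 : 1 - u⁻¹ * u⁻¹ = (u * u - 1) / (u * u) := by field_simp
  rw [e1, e2]
  field_simp

theorem stmt_0 (p a b : ℝ) (hp : 1 < p) (ha : 0 < a) (hb : |b| < a) :
    ∫ x in Set.Ioi (0:ℝ), (Real.cosh (b * x) / Real.sinh (a * x)) * x ^ (p - 1) =
      (Real.Gamma p / (2 * a) ^ p) *
        ((∑' n : ℕ, ((n : ℝ) + (a - b) / (2 * a)) ^ (-p)) +
         (∑' n : ℕ, ((n : ℝ) + (a + b) / (2 * a)) ^ (-p))) := by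
  obtain ⟨hb1, hb2⟩ := abs_lt.mp hb
  have hp0 : 0 < p := lt_trans one_pos hp
  have hme : (0 : ℝ) < a - b := by linarith
  have hpl : (0 : ℝ) < a + b := by linarith
  set q1 : ℝ := (a - b) / (2 * a) with hq1
  set q2 : ℝ := (a + b) / (2 * a) with hq2
  have hq10 : 0 < q1 := by positivity
  have hq20 : 0 < q2 := by positivity
  have hq11 : q1 ≤ 1 := by rw [hq1, div_le_one (by positivity)]; linarith
  have hq21 : q2 ≤ 1 := by rw [hq2, div_le_one (by positivity)]; linarith
  have hS1 := aux_sum p q1 hp hq10 hq11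
  have hS2 := aux_sum p q2 hp hq20 hq21
  -- positivity of the decay rates
  have hr1 : ∀ n : ℕ, (0 : ℝ) < 2 * a * n + (a - b) := fun n => by positivity
  have hr2 : ∀ n : ℕ, (0 : ℝ) < 2 * a * n + (a + b) := fun n => by positivity
  -- value of each integral
  have hfac : ∀ (c : ℝ) (n : ℕ), 0 < c → c / (2 * a) ≤ 1 →
      (1 / (2 * a * n + c)) ^ p = (2 * a) ^ (-p) * ((n : ℝ) + c / (2 * a)) ^ (-p) := by
    intro c n hc _
    have h2a : (0 : ℝ) < 2 * a := by positivity
    have hnc : (0 : ℝ) < (n : ℝ) + c / (2 * a) := by positivity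
    have hr : 2 * a * n + c = (2 * a) * ((n : ℝ) + c / (2 * a)) := by field_simp
    rw [hr, one_div, Real.inv_rpow (by positivity), ← Real.rpow_neg (by positivity),
      Real.mul_rpow h2a.le hnc.le]
  have hval : ∀ n : ℕ,
      (∫ x in Set.Ioi (0:ℝ), (x ^ (p - 1) * Real.exp (-((2 * a * n + (a - b)) * x))
          + x ^ (p - 1) * Real.exp (-((2 * a * n + (a + b)) * x))))
      = Real.Gamma p * (2 * a) ^ (-p) * (((n : ℝ) + q1) ^ (-p) + ((n : ℝ) + q2) ^ (-p)) := by
    intro n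
    rw [integral_add (aux_int p _ hp0 (hr1 n)) (aux_int p _ hp0 (hr2 n)),
      Real.integral_rpow_mul_exp_neg_mul_Ioi hp0 (hr1 n),
      Real.integral_rpow_mul_exp_neg_mul_Ioi hp0 (hr2 n),
      hfac (a - b) n hme hq11, hfac (a + b) n hpl hq21]
    ring
  -- each summand is integrable
  have hInt : ∀ n : ℕ, IntegrableOn (fun x : ℝ => x ^ (p - 1) * Real.exp (-((2 * a * n + (a - b)) * x))
      + x ^ (p - 1) * Real.exp (-((2 * a * n + (a + b)) * x))) (Set.Ioi 0) :=
    fun n => (aux_int p _ hp0 (hr1 n)).add (aux_int p _ hp0 (hr2 n))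
  -- the integral of the norm equals the integral (nonneg on Ioi 0)
  have hnorm : ∀ n : ℕ,
      (∫ x in Set.Ioi (0:ℝ), ‖x ^ (p - 1) * Real.exp (-((2 * a * n + (a - b)) * x))
          + x ^ (p - 1) * Real.exp (-((2 * a * n + (a + b)) * x))‖)
      = Real.Gamma p * (2 * a) ^ (-p) * (((n : ℝ) + q1) ^ (-p) + ((n : ℝ) + q2) ^ (-p)) := by
    intro n
    rw [← hval n]
    refine setIntegral_congr_fun measurableSet_Ioi (fun x hx => ?_)
    have hx : (0 : ℝ) < x := hx
    rw [Real.norm_of_nonneg (by positivity)]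
  have key := integral_tsum_of_summable_integral_norm
    (μ := volume.restrict (Set.Ioi (0:ℝ)))
    (F := fun (n : ℕ) (x : ℝ) => x ^ (p - 1) * Real.exp (-((2 * a * n + (a - b)) * x))
      + x ^ (p - 1) * Real.exp (-((2 * a * n + (a + b)) * x)))
    hInt
    (by
      simp_rw [hnorm]
      exact ((hS1.add hS2).mul_left _))
  rw [setIntegral_congr_fun measurableSet_Ioi
    (fun x hx => aux_pt p a b x ha hx), ← key]
  simp_rw [hval]
  rw [tsum_mul_left, Summable.tsum_add hS1 hS2]
  rw [div_eq_mul_inv, ← Real.rpow_neg (by positivity : (0:ℝ) ≤ 2 * a)]
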